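/- For each 0 ≤ j ≤ k−2, the first entry of the difference row Δ^j of the k-bonacci positions table equals 2^j, i.e., X^{j+1}_1 − X^j_1 = 2^j, and the minimal gap between consecutive entries of Δ^j is 2^j. -/

import Mathlib

/-- The k-bonacci substitution on the alphabet {0,…,k−1}. -/
def subW (k : ℕ) (w : List ℕ) : List ℕ :=
  w.flatMap (fun j => if j + 1 < k then [0, j + 1] else [0])

/-- The k-bonacci word (0-indexed). -/
def kbonacci (k n : ℕ) : ℕ := ((subW k)^[n + 1] [0]).getD n 0

/-- X^j_n: the 1-based position of the n-th (1-based) occurrence of letter j. -/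
noncomputable def Xpos (k j n : ℕ) : ℕ :=
  Nat.nth (fun m => kbonacci k m = j) (n - 1) + 1

/-- Δ^j_n = X^{j+1}_n − X^j_n. -/
noncomputable def Δrow (k j n : ℕ) : ℕ := Xpos k (j + 1) n - Xpos k j n

namespace KB

def Pw (k n : ℕ) : List ℕ := (subW k)^[n] [0]

lemma subW_append (k : ℕ) (a b : List ℕ) : subW k (a ++ b) = subW k a ++ subW k b :=
  List.flatMap_append

lemma subW_cons (k a : ℕ) (t : List ℕ) : subW k (a :: t) = subW k [a] ++ subW k t := by
  simp [subW]

lemma subW_single (k a : ℕ) : subW k [a] = if a + 1 < k then [0, a + 1] else [0] := by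
  simp [subW]

lemma Pw_succ (k n : ℕ) : Pw k (n + 1) = subW k (Pw k n) :=
  Function.iterate_succ_apply' _ _ _

lemma mem_Pw_lt (k : ℕ) (hk : 2 ≤ k) (n : ℕ) : ∀ x ∈ Pw k n, x < k := by
  induction n with
  | zero => intro x hx; simp [Pw] at hx; omega
  | succ n ih =>
    intro x hx
    rw [Pw_succ] at hx
    simp only [subW, List.mem_flatMap] at hx
    obtain ⟨a, ha, hx⟩ := hx
    split at hx <;> simp at hx <;> omega

lemma subW_prefix (k : ℕ) {a b : List ℕ} (h : a <+: b) : subW k a <+: subW k b := by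
  obtain ⟨t, rfl⟩ := h
  exact ⟨subW k t, (subW_append k a t).symm⟩

lemma Pw_prefix_succ (k : ℕ) (hk : 2 ≤ k) (n : ℕ) : Pw k n <+: Pw k (n + 1) := by
  induction n with
  | zero =>
    rw [Pw_succ]
    simp only [Pw, Function.iterate_zero_apply]
    rw [show subW k [0] = [0, 1] by rw [subW_single]; simp [show 1 < k by omega]]
    exact ⟨[1], rfl⟩
  | succ n ih =>
    have h := subW_prefix k ih
    rw [← Pw_succ k n, ← Pw_succ k (n+1)] at h
    exact h

lemma Pw_prefix (k : ℕ) (hk : 2 ≤ k) {m n : ℕ} (h : m ≤ n) : Pw k m <+: Pw k n := by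
  induction n with
  | zero => simp_all
  | succ n ih =>
    rcases Nat.lt_or_ge m (n+1) with h' | h'
    · exact (ih (by omega)).trans (Pw_prefix_succ k hk n)
    · have : m = n + 1 := by omega
      subst this; rfl

lemma length_subW_ge (k : ℕ) (w : List ℕ) : w.length ≤ (subW k w).length := by
  induction w with
  | nil => simp [subW]
  | cons a t ih =>
    rw [subW_cons, subW_single]
    split <;> simp <;> omega

lemma Pw_length (k : ℕ) (hk : 2 ≤ k) (n : ℕ) : n + 1 ≤ (Pw k n).length := by
  induction n with
  | zero => simp [Pw]
  | succ n ih =>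
    obtain ⟨t, ht⟩ := Pw_prefix k hk (Nat.zero_le n)
    have h0 : Pw k n = 0 :: t := by
      simpa [Pw] using ht.symm
    rw [Pw_succ, h0, subW_cons, subW_single]
    simp only [if_pos (show (0:ℕ)+1 < k by omega)]
    have hlt := length_subW_ge k t
    have hPn : (Pw k n).length = t.length + 1 := by rw [h0]; simp
    simp only [List.length_append, List.length_cons, List.length_nil]
    omega

lemma omega_eq_getElem (k : ℕ) (hk : 2 ≤ k) {n m : ℕ} (hn : n < (Pw k m).length) :
    kbonacci k n = (Pw k m)[n] := by
  have h1 : n < (Pw k (n+1)).length := lt_of_lt_of_le (by omega) (Pw_length k hk (n+1))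
  have h2 : kbonacci k n = (Pw k (n+1))[n] := by
    show (Pw k (n+1)).getD n 0 = _
    rw [List.getD_eq_getElem?_getD, List.getElem?_eq_getElem h1]
    rfl
  rcases le_total (n+1) m with h | h
  · rw [h2, (Pw_prefix k hk h).getElem h1]
  · rw [h2, ← (Pw_prefix k hk h).getElem hn]

lemma omega_lt (k : ℕ) (hk : 2 ≤ k) (n : ℕ) : kbonacci k n < k := by
  have h1 : n < (Pw k n).length := lt_of_lt_of_le (by omega) (Pw_length k hk n)
  rw [omega_eq_getElem k hk h1]
  exact mem_Pw_lt k hk n _ (List.getElem_mem h1)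

def Sf (k : ℕ) : ℕ → ℕ
  | 0 => 0
  | m + 1 => Sf k m + (if kbonacci k m + 1 < k then 2 else 1)

lemma Sf_strictMono (k : ℕ) : StrictMono (Sf k) := by
  apply strictMono_nat_of_lt_succ
  intro n
  show Sf k n < Sf k n + _
  split <;> omega

lemma Sf_le_two (k m : ℕ) : Sf k (m + 1) ≤ Sf k m + 2 := by
  show Sf k m + _ ≤ _
  split <;> omega

lemma Sf_lt (k m : ℕ) : Sf k m < Sf k (m + 1) := Sf_strictMono k (by omega)

lemma Sf_eq_len (k : ℕ) (hk : 2 ≤ k) {m n : ℕ} (h : m ≤ (Pw k n).length) :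
    Sf k m = (subW k ((Pw k n).take m)).length := by
  induction m with
  | zero => simp [Sf, subW]
  | succ m ih =>
    have hm : m < (Pw k n).length := by omega
    rw [List.take_succ, List.getElem?_eq_getElem hm]
    rw [subW_append]
    show Sf k m + _ = _
    rw [ih (by omega)]
    simp only [List.length_append, Option.toList_some]
    have : (Pw k n)[m] = kbonacci k m := (omega_eq_getElem k hk hm).symm
    rw [this, subW_single]
    split <;> simp

lemma omega_S_add (k : ℕ) (hk : 2 ≤ k) (m i x : ℕ)
    (hix : (subW k [kbonacci k m])[i]? = some x) :
    kbonacci k (Sf k m + i) = x := by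
  set w := Pw k m with hw
  have hm : m < w.length := lt_of_lt_of_le (by omega) (Pw_length k hk m)
  have hdrop : w.drop m = w[m] :: w.drop (m + 1) := List.drop_eq_getElem_cons hm
  have hsplit : Pw k (m + 1) = subW k (w.take m) ++ (subW k [w[m]] ++ subW k (w.drop (m + 1))) := by
    rw [Pw_succ]
    conv_lhs => rw [← hw, ← List.take_append_drop m w, subW_append, hdrop, subW_cons]
  have hwm : w[m] = kbonacci k m := (omega_eq_getElem k hk hm).symm
  have hlen : (subW k (w.take m)).length = Sf k m := (Sf_eq_len k hk (le_of_lt hm)).symm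
  have hilt : i < (subW k [kbonacci k m]).length := by
    by_contra hi
    rw [List.getElem?_eq_none (by omega)] at hix
    exact absurd hix (by simp)
  have hsome : (Pw k (m + 1))[Sf k m + i]? = some x := by
    rw [hsplit, List.getElem?_append_right (by omega), hlen]
    have : Sf k m + i - Sf k m = i := by omega
    rw [this, List.getElem?_append_left (by rw [hwm]; exact hilt), hwm]
    exact hix
  obtain ⟨hlt, hval⟩ := List.getElem?_eq_some_iff.mp hsome
  rw [omega_eq_getElem k hk hlt, hval]

lemma omega_S (k : ℕ) (hk : 2 ≤ k) (m : ℕ) : kbonacci k (Sf k m) = 0 := by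
  have := omega_S_add k hk m 0 0 ?_
  · simpa using this
  · rw [subW_single]; split <;> rfl

lemma omega_S1 (k : ℕ) (hk : 2 ≤ k) (m : ℕ) (h : kbonacci k m + 1 < k) :
    kbonacci k (Sf k m + 1) = kbonacci k m + 1 := by
  apply omega_S_add k hk m 1
  rw [subW_single, if_pos h]
  rfl

lemma exists_interval (k p : ℕ) : ∃ m, Sf k m ≤ p ∧ p < Sf k (m + 1) := by
  induction p with
  | zero => exact ⟨0, by simp [Sf], by simpa [Sf] using Sf_lt k 0⟩
  | succ p ih =>
    obtain ⟨m, h1, h2⟩ := ih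
    rcases Nat.lt_or_ge (p + 1) (Sf k (m + 1)) with h | h
    · exact ⟨m, by omega, h⟩
    · exact ⟨m + 1, h, by have := Sf_lt k (m + 1); omega⟩

lemma pos_form (k : ℕ) {p m : ℕ} (h1 : Sf k m ≤ p) (h2 : p < Sf k (m + 1)) :
    p = Sf k m ∨ (p = Sf k m + 1 ∧ kbonacci k m + 1 < k) := by
  by_cases hc : kbonacci k m + 1 < k
  · simp only [Sf, if_pos hc] at h2
    omega
  · simp only [Sf, if_neg hc] at h2
    omega

lemma omega_pos (k : ℕ) (hk : 2 ≤ k) {p : ℕ} (hp : 0 < kbonacci k p) :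
    ∃ m, kbonacci k m + 1 < k ∧ p = Sf k m + 1 ∧ kbonacci k p = kbonacci k m + 1 := by
  obtain ⟨m, h1, h2⟩ := exists_interval k p
  rcases pos_form k h1 h2 with h | ⟨h, hc⟩
  · rw [h, omega_S k hk] at hp; omega
  · exact ⟨m, hc, h, by rw [h, omega_S1 k hk m hc]⟩

lemma Sf_steps2 (k : ℕ) (x : ℕ) : ∀ n, (∀ i, x ≤ i → i < x + n → kbonacci k i + 1 < k) →
    Sf k (x + n) = Sf k x + 2 * n := by
  intro n
  induction n with
  | zero => simp
  | succ n ih =>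
    intro h
    have : x + (n+1) = (x + n) + 1 := by omega
    rw [this]
    show Sf k (x+n) + _ = _
    rw [if_pos (h (x+n) (by omega) (by omega)), ih (fun i h1 h2 => h i h1 (by omega))]
    omega

lemma infiniteA (k : ℕ) (hk : 2 ≤ k) (j : ℕ) (hj : j ≤ k - 1) :
    {m | kbonacci k m = j}.Infinite := by
  induction j with
  | zero =>
    exact Set.infinite_of_injective_forall_mem (Sf_strictMono k).injective
      (fun m => omega_S k hk m)
  | succ j ih =>
    have hj' : j + 1 < k := by omega
    have himg : (fun m => Sf k m + 1) '' {m | kbonacci k m = j} ⊆ {m | kbonacci k m = j + 1} := by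
      rintro _ ⟨m, hm, rfl⟩
      simp only [Set.mem_setOf_eq] at hm ⊢
      rw [omega_S1 k hk m (by omega), hm]
    refine Set.Infinite.mono himg ?_
    refine Set.Infinite.image ?_ (ih (by omega))
    exact Function.Injective.injOn (fun a b h => (Sf_strictMono k).injective (by omega))

lemma count_transfer (k : ℕ) (hk : 2 ≤ k) (j : ℕ) (hj : j + 1 ≤ k - 1) (x : ℕ) :
    Nat.count (fun m => kbonacci k m = j + 1) (Sf k x + 1) =
      Nat.count (fun m => kbonacci k m = j) x := by
  induction x with
  | zero =>
    have h0 : Sf k 0 = 0 := rfl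
    rw [h0]
    rw [Nat.count_succ]
    have : kbonacci k 0 = 0 := by simpa [h0] using omega_S k hk 0
    simp [this]
  | succ x ih =>
    have h0 : kbonacci k (Sf k x) = 0 := omega_S k hk x
    have ih' : Nat.count (fun m => kbonacci k m = j + 1) (Sf k x) =
        Nat.count (fun m => kbonacci k m = j) x := by
      rw [← ih, Nat.count_succ]
      simp [h0]
    by_cases hc : kbonacci k x + 1 < k
    · have hS : Sf k (x + 1) = Sf k x + 2 := by simp [Sf, hc]
      have h1 : kbonacci k (Sf k x + 1) = kbonacci k x + 1 := omega_S1 k hk x hc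
      have h2 : kbonacci k (Sf k x + 2) = 0 := by
        have := omega_S k hk (x + 1); rwa [hS] at this
      rw [hS]
      simp only [Nat.count_succ, h0, h1, h2, ih']
      by_cases hx : kbonacci k x = j
      · simp [hx]
      · have hx' : ¬ (kbonacci k x + 1 = j + 1) := by omega
        simp [hx, hx']
    · have hS : Sf k (x + 1) = Sf k x + 1 := by simp [Sf, hc]
      have h2 : kbonacci k (Sf k x + 1) = 0 := by
        have := omega_S k hk (x + 1); rwa [hS] at this
      have hxj : ¬ (kbonacci k x = j) := by omega
      rw [hS]
      simp only [Nat.count_succ, h0, h2, ih']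
      simp [hxj]

lemma nth_transfer (k : ℕ) (hk : 2 ≤ k) (j : ℕ) (hj : j + 1 ≤ k - 1) (i : ℕ) :
    Nat.nth (fun m => kbonacci k m = j + 1) i =
      Sf k (Nat.nth (fun m => kbonacci k m = j) i) + 1 := by
  set x := Nat.nth (fun m => kbonacci k m = j) i with hx
  have hinf : {m | kbonacci k m = j}.Infinite := infiniteA k hk j (by omega)
  have hmem : kbonacci k x = j := Nat.nth_mem_of_infinite hinf i
  have hcnt : Nat.count (fun m => kbonacci k m = j) x = i := Nat.count_nth_of_infinite hinf i
  have hmem' : kbonacci k (Sf k x + 1) = j + 1 := by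
    rw [omega_S1 k hk x (by omega), hmem]
  calc Nat.nth (fun m => kbonacci k m = j + 1) i
      = Nat.nth (fun m => kbonacci k m = j + 1)
          (Nat.count (fun m => kbonacci k m = j + 1) (Sf k x + 1)) := by
        rw [count_transfer k hk j hj x, hcnt]
    _ = Sf k x + 1 := Nat.nth_count hmem'

/-- number of "expanding" letters below x -/
def Dc (k x : ℕ) : ℕ := Nat.count (fun i => kbonacci k i + 1 < k) x

lemma Sf_eq_add_Dc (k x : ℕ) : Sf k x = x + Dc k x := by
  induction x with
  | zero => rfl
  | succ x ih =>
    show Sf k x + _ = _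
    rw [Dc, Nat.count_succ, ← Dc, ih]
    split <;> omega

lemma card_filter_Ico_succ (p : ℕ → Prop) [DecidablePred p] {a b : ℕ} (h : a ≤ b) :
    ((Finset.Ico a (b + 1)).filter p).card =
      ((Finset.Ico a b).filter p).card + if p b then 1 else 0 := by
  rw [Nat.Ico_succ_right_eq_insert_Ico h, Finset.filter_insert]
  split
  · rw [Finset.card_insert_of_notMem (by simp)]
  · simp

lemma count_Ico (p : ℕ → Prop) [DecidablePred p] {a b : ℕ} (h : a ≤ b) :
    Nat.count p b = Nat.count p a + ((Finset.Ico a b).filter p).card := by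
  induction b, h using Nat.le_induction with
  | base => simp
  | succ b hb ih =>
    rw [Nat.count_succ, ih, card_filter_Ico_succ p hb]
    split <;> omega

lemma block_count (k : ℕ) (hk : 2 ≤ k) (t : ℕ) (ht1 : 1 ≤ t) (ht2 : t ≤ k - 1) (x : ℕ) :
    ∀ n, ((Finset.Ico (Sf k x + 1) (Sf k (x + n) + 1)).filter
            (fun i => kbonacci k i ≤ t)).card
      = n + ((Finset.Ico x (x + n)).filter (fun i => kbonacci k i ≤ t - 1)).card := by
  intro n
  induction n with
  | zero => simp
  | succ n ih =>
    have hax : Sf k x ≤ Sf k (x + n) := (Sf_strictMono k).monotone (by omega)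
    have hrhs : ((Finset.Ico x (x + (n+1))).filter (fun i => kbonacci k i ≤ t - 1)).card
        = ((Finset.Ico x (x + n)).filter (fun i => kbonacci k i ≤ t - 1)).card
          + if kbonacci k (x + n) ≤ t - 1 then 1 else 0 := by
      rw [show x + (n+1) = (x + n) + 1 by omega]
      exact card_filter_Ico_succ _ (by omega)
    by_cases hc : kbonacci k (x + n) + 1 < k
    · have hS : Sf k (x + n + 1) = Sf k (x + n) + 2 := by simp [Sf, hc]
      have h1 : kbonacci k (Sf k (x + n) + 1) = kbonacci k (x + n) + 1 :=
        omega_S1 k hk (x + n) hc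
      have h2 : kbonacci k (Sf k (x + n) + 2) = 0 := by
        have := omega_S k hk (x + n + 1); rwa [hS] at this
      have hlhs : ((Finset.Ico (Sf k x + 1) (Sf k (x + (n+1)) + 1)).filter
            (fun i => kbonacci k i ≤ t)).card
          = ((Finset.Ico (Sf k x + 1) (Sf k (x + n) + 1)).filter
              (fun i => kbonacci k i ≤ t)).card
            + ((if kbonacci k (Sf k (x+n) + 1) ≤ t then 1 else 0)
            + (if kbonacci k (Sf k (x+n) + 2) ≤ t then 1 else 0)) := by
        rw [show x + (n+1) = (x + n) + 1 by omega, hS]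
        rw [show Sf k (x + n) + 2 + 1 = (Sf k (x+n) + 1 + 1) + 1 by omega]
        rw [card_filter_Ico_succ _ (by omega), card_filter_Ico_succ _ (by omega)]
        rw [show Sf k (x+n) + 1 + 1 = Sf k (x+n) + 2 by omega]
        omega
      rw [hlhs, hrhs, ih, h1, h2]
      have hiff : (kbonacci k (x+n) + 1 ≤ t) ↔ (kbonacci k (x+n) ≤ t - 1) := by omega
      by_cases hxt : kbonacci k (x+n) ≤ t - 1
      · simp [hxt, hiff.mpr hxt, show (0:ℕ) ≤ t by omega]
        omega
      · simp [hxt, (show ¬ (kbonacci k (x+n) + 1 ≤ t) from fun h => hxt (hiff.mp h)),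
          show (0:ℕ) ≤ t by omega]
        omega
    · have hS : Sf k (x + n + 1) = Sf k (x + n) + 1 := by simp [Sf, hc]
      have h2 : kbonacci k (Sf k (x + n) + 1) = 0 := by
        have := omega_S k hk (x + n + 1); rwa [hS] at this
      have hlhs : ((Finset.Ico (Sf k x + 1) (Sf k (x + (n+1)) + 1)).filter
            (fun i => kbonacci k i ≤ t)).card
          = ((Finset.Ico (Sf k x + 1) (Sf k (x + n) + 1)).filter
              (fun i => kbonacci k i ≤ t)).card
            + (if kbonacci k (Sf k (x+n) + 1) ≤ t then 1 else 0) := by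
        rw [show x + (n+1) = (x + n) + 1 by omega, hS]
        rw [show Sf k (x + n) + 1 + 1 = (Sf k (x+n) + 1) + 1 by omega]
        rw [card_filter_Ico_succ _ (by omega)]
      have hxt : ¬ (kbonacci k (x+n) ≤ t - 1) := by omega
      rw [hlhs, hrhs, ih, h2]
      simp [hxt, show (0:ℕ) ≤ t by omega]
      omega

lemma lemA (k : ℕ) (hk : 2 ≤ k) :
    ∀ j, j ≤ k - 1 → ∀ t, j ≤ t → t ≤ k - 1 → ∀ x x', kbonacci k x = j → kbonacci k x' = j →
      x < x' → (∀ i, x < i → i < x' → kbonacci k i ≠ j) →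
      2 ^ j ≤ ((Finset.Ico x x').filter (fun i => kbonacci k i ≤ t)).card := by
  intro j
  induction j with
  | zero =>
    intro _ t _ _ x x' hx hx' hlt _
    have : x ∈ (Finset.Ico x x').filter (fun i => kbonacci k i ≤ t) := by
      simp [Finset.mem_Ico, hx, hlt]
    calc 2^0 = 1 := by norm_num
    _ ≤ _ := Finset.card_pos.mpr ⟨x, this⟩
  | succ j ih =>
    intro hjk t hjt htk y y' hy hy' hlt hcons
    obtain ⟨m, hmc, hym, hmval⟩ := omega_pos k hk (p := y) (by omega)
    obtain ⟨m', hmc', hym', hmval'⟩ := omega_pos k hk (p := y') (by omega)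
    have hm : kbonacci k m = j := by omega
    have hm' : kbonacci k m' = j := by omega
    have hmm : m < m' := by
      have : Sf k m < Sf k m' := by omega
      exact (Sf_strictMono k).lt_iff_lt.mp this
    have hconsm : ∀ i, m < i → i < m' → kbonacci k i ≠ j := by
      intro i h1 h2 hij
      have hik : kbonacci k i + 1 < k := by omega
      have : kbonacci k (Sf k i + 1) = j + 1 := by rw [omega_S1 k hk i hik, hij]
      refine hcons (Sf k i + 1) ?_ ?_ this
      · have := (Sf_strictMono k) h1; omega
      · have := (Sf_strictMono k) h2; omega
    set n := m' - m with hn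
    have hm'eq : m' = m + n := by omega
    have hbc := block_count k hk t (by omega) htk m n
    rw [← hm'eq] at hbc
    have hIH1 : 2 ^ j ≤ ((Finset.Ico m m').filter (fun i => kbonacci k i ≤ k - 1)).card :=
      ih (by omega) (k-1) (by omega) (le_refl _) m m' hm hm' hmm hconsm
    have hn1 : 2 ^ j ≤ n := by
      calc 2^j ≤ ((Finset.Ico m m').filter (fun i => kbonacci k i ≤ k - 1)).card := hIH1
      _ ≤ (Finset.Ico m m').card := Finset.card_filter_le _ _
      _ = n := by rw [Nat.card_Ico]
    have hIH2 : 2 ^ j ≤ ((Finset.Ico m m').filter (fun i => kbonacci k i ≤ t - 1)).card :=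
      ih (by omega) (t-1) (by omega) (by omega) m m' hm hm' hmm hconsm
    rw [hym, hym']
    rw [hbc]
    have : (2:ℕ)^(j+1) = 2^j + 2^j := by rw [pow_succ]; omega
    omega

lemma first_occ (k : ℕ) (hk : 2 ≤ k) :
    ∀ j, j ≤ k - 1 → kbonacci k (2 ^ j - 1) = j ∧ ∀ p < 2 ^ j - 1, kbonacci k p < j := by
  intro j
  induction j with
  | zero =>
    intro _
    constructor
    · simpa [show Sf k 0 = 0 from rfl] using omega_S k hk 0
    · intro p hp; omega
  | succ j ih =>
    intro hjk
    obtain ⟨hfst, hbelow⟩ := ih (by omega)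
    have h2j : 1 ≤ 2 ^ j := Nat.one_le_two_pow
    have h2j1 : (2:ℕ)^(j+1) = 2^j + 2^j := by rw [pow_succ]; omega
    have hall : ∀ i, 0 ≤ i → i < 0 + (2 ^ j - 1) → kbonacci k i + 1 < k := by
      intro i _ hi
      have := hbelow i (by omega)
      omega
    have hS : Sf k (2 ^ j - 1) = 2 * (2 ^ j - 1) := by
      have := Sf_steps2 k 0 (2 ^ j - 1) hall
      simpa [show Sf k 0 = 0 from rfl] using this
    have hpos : 2 ^ (j+1) - 1 = Sf k (2 ^ j - 1) + 1 := by omega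
    constructor
    · rw [hpos, omega_S1 k hk _ (by omega), hfst]
    · intro p hp
      rcases Nat.lt_or_ge p (Sf k (2 ^ j - 1)) with h | h
      · obtain ⟨m, h1, h2⟩ := exists_interval k p
        have hm : m < 2 ^ j - 1 := by
          by_contra hm
          have : Sf k (2 ^ j - 1) ≤ Sf k m := (Sf_strictMono k).monotone (by omega)
          omega
        rcases pos_form k h1 h2 with h' | ⟨h', hc⟩
        · rw [h', omega_S k hk]; omega
        · rw [h', omega_S1 k hk m hc]
          have := hbelow m hm
          omega
      · have hpe : p = Sf k (2 ^ j - 1) := by omega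
        rw [hpe, omega_S k hk]
        omega

lemma nth_zero_eq (k : ℕ) (hk : 2 ≤ k) (j : ℕ) (hj : j ≤ k - 1) :
    Nat.nth (fun m => kbonacci k m = j) 0 = 2 ^ j - 1 := by
  rw [Nat.nth_zero]
  apply IsLeast.csInf_eq
  constructor
  · exact (first_occ k hk j hj).1
  · intro p hp
    by_contra h
    push_neg at h
    have := (first_occ k hk j hj).2 p h
    simp only [Set.mem_setOf_eq] at hp
    omega

lemma count_of_forall (p : ℕ → Prop) [DecidablePred p] (n : ℕ) (h : ∀ i < n, p i) :
    Nat.count p n = n := by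
  induction n with
  | zero => simp
  | succ n ih =>
    rw [Nat.count_succ, ih (fun i hi => h i (by omega)), if_pos (h n (by omega))]

lemma delta_formula (k : ℕ) (hk : 2 ≤ k) (j : ℕ) (hj : j ≤ k - 2) (n : ℕ) :
    Δrow k j n = Dc k (Nat.nth (fun m => kbonacci k m = j) (n - 1)) + 1 := by
  have hj1 : j + 1 ≤ k - 1 := by omega
  rw [Δrow, Xpos, Xpos, nth_transfer k hk j hj1 (n-1)]
  rw [Sf_eq_add_Dc]
  omega

lemma lemB (k : ℕ) (hk : 2 ≤ k) :
    ∀ j, j ≤ k - 2 → ∃ x x', kbonacci k x = j ∧ kbonacci k x' = j ∧ x' = x + 2 ^ j ∧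
      (∀ i, x < i → i < x' → kbonacci k i ≠ j) ∧
      (∀ i, x ≤ i → i < x' → kbonacci k i ≤ j) := by
  intro j
  induction j with
  | zero =>
    intro _
    set p := 2 ^ (k - 1) - 1 with hp
    have hωp : kbonacci k p = k - 1 := (first_occ k hk (k-1) (le_refl _)).1
    have hnc : ¬ (kbonacci k p + 1 < k) := by omega
    have hS : Sf k (p + 1) = Sf k p + 1 := by simp [Sf, hnc]
    refine ⟨Sf k p, Sf k p + 1, omega_S k hk p, ?_, by norm_num, ?_, ?_⟩
    · rw [← hS]; exact omega_S k hk (p+1)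
    · intro i h1 h2; omega
    · intro i h1 h2
      have : i = Sf k p := by omega
      rw [this, omega_S k hk p]
  | succ j ih =>
    intro hjk
    obtain ⟨x, x', hx, hx', hxx, hconsx, hle⟩ := ih (by omega)
    have hstep : ∀ i, x ≤ i → i < x + 2 ^ j → kbonacci k i + 1 < k := by
      intro i h1 h2
      have := hle i h1 (by omega)
      omega
    have hSx' : Sf k x' = Sf k x + 2 * 2 ^ j := by
      rw [hxx]; exact Sf_steps2 k x (2 ^ j) hstep
    have hj1 : j + 1 < k := by omega
    refine ⟨Sf k x + 1, Sf k x' + 1, ?_, ?_, ?_, ?_, ?_⟩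
    · rw [omega_S1 k hk x (by omega), hx]
    · rw [omega_S1 k hk x' (by omega), hx']
    · rw [hSx', pow_succ]; omega
    · -- consecutiveness
      intro i h1 h2 hij
      obtain ⟨m, hmc, him, hmval⟩ := omega_pos k hk (p := i) (by omega)
      have hmj : kbonacci k m = j := by omega
      have hxm : x < m := by
        have : Sf k x < Sf k m := by omega
        exact (Sf_strictMono k).lt_iff_lt.mp this
      have hmx' : m < x' := by
        have : Sf k m < Sf k x' := by omega
        exact (Sf_strictMono k).lt_iff_lt.mp this
      exact hconsx m hxm hmx' hmj
    · -- letters bounded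
      intro i h1 h2
      obtain ⟨m, hm1, hm2⟩ := exists_interval k i
      have hxm : x ≤ m := by
        by_contra h
        push_neg at h
        have : Sf k (m+1) ≤ Sf k x := (Sf_strictMono k).monotone (by omega)
        omega
      rcases pos_form k hm1 hm2 with h' | ⟨h', hc⟩
      · rw [h', omega_S k hk]; omega
      · have hmx' : m < x' := by
          by_contra h
          push_neg at h
          have : Sf k x' ≤ Sf k m := (Sf_strictMono k).monotone h
          omega
        rw [h', omega_S1 k hk m hc]
        have := hle m hxm hmx'
        omega

lemma nth_consecutive (k : ℕ) (hk : 2 ≤ k) (j : ℕ) (hj : j ≤ k - 1) (a : ℕ) :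
    ∀ i, Nat.nth (fun m => kbonacci k m = j) a < i →
      i < Nat.nth (fun m => kbonacci k m = j) (a + 1) → kbonacci k i ≠ j := by
  intro i h1 h2 hij
  have hinf := infiniteA k hk j hj
  have hni : Nat.nth (fun m => kbonacci k m = j) (Nat.count (fun m => kbonacci k m = j) i) = i :=
    Nat.nth_count hij
  set c := Nat.count (fun m => kbonacci k m = j) i
  rw [← hni] at h1 h2
  have := (Nat.nth_lt_nth hinf).mp h1
  have := (Nat.nth_lt_nth hinf).mp h2
  omega

lemma gap_eq (k : ℕ) (hk : 2 ≤ k) (j : ℕ) (hj : j ≤ k - 2) (n : ℕ) (hn : 1 ≤ n) :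
    Δrow k j (n + 1) - Δrow k j n =
      ((Finset.Ico (Nat.nth (fun m => kbonacci k m = j) (n - 1))
        (Nat.nth (fun m => kbonacci k m = j) n)).filter
          (fun i => kbonacci k i + 1 < k)).card := by
  have hinf := infiniteA k hk j (by omega)
  set x := Nat.nth (fun m => kbonacci k m = j) (n - 1) with hx
  set x' := Nat.nth (fun m => kbonacci k m = j) n with hx'
  have hlt : x < x' := by
    rw [hx, hx']
    exact (Nat.nth_lt_nth hinf).mpr (by omega)
  have h1 : Δrow k j (n+1) = Dc k x' + 1 := by
    have := delta_formula k hk j hj (n+1)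
    simpa [show n + 1 - 1 = n from rfl] using this
  have h2 : Δrow k j n = Dc k x + 1 := delta_formula k hk j hj n
  have h3 : Dc k x' = Dc k x + ((Finset.Ico x x').filter (fun i => kbonacci k i + 1 < k)).card :=
    count_Ico _ (le_of_lt hlt)
  omega

end KB

open KB in
/-- For 0 ≤ j ≤ k−2, the first entry of Δ^j equals 2^j, and the minimal gap
between consecutive entries of Δ^j equals 2^j. -/
theorem delta_row_first_entry_and_min_gap (k j : ℕ) (hk : 2 ≤ k) (hj : j ≤ k - 2) :
    Δrow k j 1 = 2 ^ j ∧
    IsLeast {g | ∃ n, 1 ≤ n ∧ Δrow k j (n + 1) - Δrow k j n = g} (2 ^ j) := by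
  have h2j : 1 ≤ 2 ^ j := Nat.one_le_two_pow
  constructor
  · rw [delta_formula k hk j hj 1, show (1:ℕ) - 1 = 0 from rfl, nth_zero_eq k hk j (by omega)]
    have : Dc k (2 ^ j - 1) = 2 ^ j - 1 := by
      apply count_of_forall
      intro i hi
      have := (first_occ k hk j (by omega)).2 i hi
      omega
    omega
  constructor
  · -- membership
    obtain ⟨x, x', hx, hx', hxx, hcons, hle⟩ := lemB k hk j hj
    set c := Nat.count (fun m => kbonacci k m = j) x with hc
    have h1 : Nat.nth (fun m => kbonacci k m = j) c = x := Nat.nth_count hx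
    have hcount : Nat.count (fun m => kbonacci k m = j) x' = c + 1 := by
      rw [count_Ico (fun m => kbonacci k m = j) (show x ≤ x' by omega)]
      have hsing : (Finset.Ico x x').filter (fun i => kbonacci k i = j) = {x} := by
        apply Finset.eq_singleton_iff_unique_mem.mpr
        constructor
        · simp only [Finset.mem_filter, Finset.mem_Ico]
          exact ⟨⟨le_refl x, by omega⟩, hx⟩
        · intro i hi
          simp only [Finset.mem_filter, Finset.mem_Ico] at hi
          obtain ⟨⟨hi1, hi2⟩, hi3⟩ := hi
          by_contra hne
          exact hcons i (by omega) hi2 hi3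
      rw [hsing]
      simp
      exact hc.symm
    have h2 : Nat.nth (fun m => kbonacci k m = j) (c + 1) = x' := by
      rw [← hcount]; exact Nat.nth_count hx'
    refine ⟨c + 1, by omega, ?_⟩
    rw [gap_eq k hk j hj (c+1) (by omega)]
    rw [show c + 1 - 1 = c from rfl, h1, h2]
    rw [Finset.filter_true_of_mem]
    · rw [Nat.card_Ico]; omega
    · intro i hi
      simp only [Finset.mem_Ico] at hi
      have := hle i hi.1 hi.2
      omega
  · -- lower bound
    rintro g ⟨n, hn, rfl⟩
    rw [gap_eq k hk j hj n hn]
    have hinf := infiniteA k hk j (by omega)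
    set x := Nat.nth (fun m => kbonacci k m = j) (n - 1) with hx
    set x' := Nat.nth (fun m => kbonacci k m = j) n with hx'
    have hlt : x < x' := (Nat.nth_lt_nth hinf).mpr (by omega)
    have hxm : kbonacci k x = j := Nat.nth_mem_of_infinite hinf (n-1)
    have hxm' : kbonacci k x' = j := Nat.nth_mem_of_infinite hinf n
    have hcons : ∀ i, x < i → i < x' → kbonacci k i ≠ j := by
      have := nth_consecutive k hk j (by omega) (n-1)
      rwa [show n - 1 + 1 = n by omega] at this
    have heq : (Finset.Ico x x').filter (fun i => kbonacci k i + 1 < k)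
        = (Finset.Ico x x').filter (fun i => kbonacci k i ≤ k - 2) := by
      apply Finset.filter_congr
      intro i _
      constructor <;> intro h <;> simp_all <;> omega
    rw [heq]
    exact lemA k hk j (by omega) (k - 2) hj (by omega) x x' hxm hxm' hlt hcons
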